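/- Let ε ∈ ℝ and let θ : ℤ → ℝ satisfy sin((θₙ₊₁ − 2θₙ + θₙ₋₁)/4) + ε sin((θₙ₊₁ + 2θₙ + θₙ₋₁)/4) = 0 for all n ∈ ℤ. Then the quantity cos((θₙ₊₁ − θₙ)/2) + ε cos((θₙ₊₁ + θₙ)/2) is independent of n, i.e., there exists Λ ∈ ℝ with cos((θₙ₊₁ − θₙ)/2) + ε cos((θₙ₊₁ + θₙ)/2) = Λ for all n. -/

import Mathlib

private lemma pend_key (ε a b c : ℝ)
    (h : Real.sin ((a - 2 * b + c) / 4) + ε * Real.sin ((a + 2 * b + c) / 4) = 0) :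
    Real.cos ((a - b) / 2) + ε * Real.cos ((a + b) / 2)
      = Real.cos ((b - c) / 2) + ε * Real.cos ((b + c) / 2) := by
  have h1 : Real.cos ((a - b) / 2) - Real.cos ((b - c) / 2)
      = -2 * Real.sin ((a - c) / 4) * Real.sin ((a - 2 * b + c) / 4) := by
    rw [Real.cos_sub_cos]; ring_nf
  have h2 : Real.cos ((a + b) / 2) - Real.cos ((b + c) / 2)
      = -2 * Real.sin ((a + 2 * b + c) / 4) * Real.sin ((a - c) / 4) := by
    rw [Real.cos_sub_cos]; ring_nf
  linear_combination h1 + ε * h2 + (-2 * Real.sin ((a - c) / 4)) * h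

/-- The discrete pendulum equation has the conserved quantity
`cos((θₙ₊₁ − θₙ)/2) + ε cos((θₙ₊₁ + θₙ)/2)`. -/
theorem discrete_pendulum_conserved_quantity (ε : ℝ) (θ : ℤ → ℝ)
    (hpend : ∀ n : ℤ,
      Real.sin ((θ (n + 1) - 2 * θ n + θ (n - 1)) / 4)
        + ε * Real.sin ((θ (n + 1) + 2 * θ n + θ (n - 1)) / 4) = 0) :
    ∃ Λ : ℝ, ∀ n : ℤ,
      Real.cos ((θ (n + 1) - θ n) / 2) + ε * Real.cos ((θ (n + 1) + θ n) / 2) = Λ := by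
  set F : ℤ → ℝ := fun n =>
    Real.cos ((θ (n + 1) - θ n) / 2) + ε * Real.cos ((θ (n + 1) + θ n) / 2) with hF
  have step : ∀ n : ℤ, F n = F (n - 1) := by
    intro n
    have h := hpend n
    have := pend_key ε (θ (n + 1)) (θ n) (θ (n - 1)) h
    simpa [hF, sub_add_cancel] using this
  refine ⟨F 0, fun n => ?_⟩
  show F n = F 0
  induction n using Int.induction_on with
  | zero => rfl
  | succ k ih => rw [← ih]; have := step (k + 1); simpa using this
  | pred k ih => rw [← ih]; have := step (-k); simpa [show (-(k:ℤ) - 1) = -(k+1) by ring] using this.symm
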